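/- Let G be drawn from the (n, p, q)-planted partition model. For any 0 < δ < 1, with probability at least 1 − δ, simultaneously for all rooted binary trees T with leaves V, |cost_G(T) − E[cost_G(T)]| ≤ (n²/2)·√(2n·ln(2n) + ln(2/δ)). -/

import Mathlib

open Finset

/-- A rooted binary tree whose leaves are labeled by elements of `Fin n`. -/
inductive HTree (n : ℕ) : Type where
  | leaf : Fin n → HTree n
  | node : HTree n → HTree n → HTree n

namespace HTree

variable {n : ℕ}

/-- The list of leaf labels, left to right. -/
def leafList : HTree n → List (Fin n)
  | .leaf v => [v]
  | .node l r => l.leafList ++ r.leafList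

/-- The set of leaf labels of a tree. -/
def leaves (T : HTree n) : Finset (Fin n) := T.leafList.toFinset

/-- `T` is a hierarchical clustering tree of the whole vertex set `Fin n`:
its leaves are in one-to-one correspondence with `Fin n`. -/
def IsFullTree (T : HTree n) : Prop := T.leafList.Nodup ∧ T.leaves = Finset.univ

/-- `|leaves(T[i ∨ j])|`: the number of leaves of the subtree rooted at the
lowest common ancestor of leaves `i` and `j`. -/
def lcaSize : HTree n → Fin n → Fin n → ℕ
  | .leaf _, _, _ => 1
  | .node l r, i, j =>
    if i ∈ l.leaves ∧ j ∈ l.leaves then l.lcaSize i j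
    else if i ∈ r.leaves ∧ j ∈ r.leaves then r.lcaSize i j
    else (l.leaves ∪ r.leaves).card

/-- `cost_G(T) = Σ_{{i,j}} w_{ij} |leaves(T[i ∨ j])|`, the sum being over
unordered pairs (represented as ordered pairs `p.1 < p.2`). -/
def pairCost (w : Fin n → Fin n → ℝ) (T : HTree n) : ℝ :=
  ∑ p ∈ Finset.univ.filter (fun p : Fin n × Fin n => p.1 < p.2),
    w p.1 p.2 * (T.lcaSize p.1 p.2 : ℝ)

/-- `w(A, B)`: total weight of edges between `A` and `B`. -/
def cut (w : Fin n → Fin n → ℝ) (A B : Finset (Fin n)) : ℝ :=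
  ∑ i ∈ A, ∑ j ∈ B, w i j

/-- The sum-of-splits formulation of the cost:
`Σ over internal splits S → (S₁,S₂) of |S| ⬝ w(S₁,S₂)`. -/
def splitCost (w : Fin n → Fin n → ℝ) : HTree n → ℝ
  | .leaf _ => 0
  | .node l r =>
      ((l.leaves ∪ r.leaves).card : ℝ) * cut w l.leaves r.leaves
        + splitCost w l + splitCost w r

/-- `Subtree t T`: `t` occurs as a subtree of `T`. -/
inductive Subtree : HTree n → HTree n → Prop
  | refl (t : HTree n) : Subtree t t
  | left {t l r : HTree n} : Subtree t l → Subtree t (.node l r)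
  | right {t l r : HTree n} : Subtree t r → Subtree t (.node l r)

end HTree


section Aux
open Real


lemma hoeffding_two_point {p : ℝ} (hp0 : 0 ≤ p) (hp1 : p ≤ 1) (x : ℝ) :
    (1 - p) * Real.exp (-(p * x)) + p * Real.exp ((1 - p) * x) ≤ Real.exp (x ^ 2 / 8) := by
  set den : ℝ → ℝ := fun y => 1 - p + p * Real.exp y with hden_def
  have hden_pos : ∀ y, 0 < den y := by
    intro y
    rcases eq_or_lt_of_le hp0 with h | h
    · simp only [hden_def, ← h]; norm_num
    · have := mul_pos h (Real.exp_pos y)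
      simp only [hden_def]; linarith
  have hden_deriv : ∀ y, HasDerivAt den (p * Real.exp y) y := by
    intro y
    exact ((Real.hasDerivAt_exp y).const_mul p).const_add (1 - p)
  set φ' : ℝ → ℝ := fun y => p * Real.exp y / den y with hφ'_def
  have hφderiv : ∀ y, HasDerivAt (fun z => Real.log (den z)) (φ' y) y := by
    intro y
    exact (hden_deriv y).log (ne_of_gt (hden_pos y))
  set ψ : ℝ → ℝ := fun y => φ' y - y / 4 with hψ_def
  have hφ'deriv : ∀ y, HasDerivAt φ'
      ((p * Real.exp y * den y - p * Real.exp y * (p * Real.exp y)) / den y ^ 2) y := by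
    intro y
    exact ((Real.hasDerivAt_exp y).const_mul p).div (hden_deriv y) (ne_of_gt (hden_pos y))
  have hψderiv : ∀ y, HasDerivAt ψ
      ((p * Real.exp y * den y - p * Real.exp y * (p * Real.exp y)) / den y ^ 2 - 1/4) y := by
    intro y
    exact (hφ'deriv y).sub ((hasDerivAt_id y).div_const 4)
  have hψ_anti : Antitone ψ := by
    apply antitone_of_deriv_nonpos
    · exact fun y => (hψderiv y).differentiableAt
    · intro y
      rw [(hψderiv y).deriv]
      have h1 : p * Real.exp y * den y - p * Real.exp y * (p * Real.exp y)
          = p * (1 - p) * Real.exp y := by simp only [hden_def]; ring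
      rw [h1]
      have h2 : p * (1 - p) * Real.exp y / den y ^ 2 ≤ 1/4 := by
        rw [div_le_iff₀ (pow_pos (hden_pos y) 2)]
        have h3 : den y = 1 - p + p * Real.exp y := rfl
        nlinarith [sq_nonneg (1 - p - p * Real.exp y)]
      linarith
  have hψ0 : ψ 0 = p := by simp [hψ_def, hφ'_def, hden_def]
  set g : ℝ → ℝ := fun y => Real.log (den y) - p * y - y ^ 2 / 8 with hg_def
  have hgderiv : ∀ y, HasDerivAt g (ψ y - ψ 0) y := by
    intro y
    have h4 : HasDerivAt g (φ' y - p - 2 * y / 8) y :=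
      ((hφderiv y).sub (((hasDerivAt_id y).const_mul p).congr_deriv (by ring))).sub
        (((hasDerivAt_pow 2 y).div_const 8).congr_deriv (by push_cast; ring))
    convert h4 using 1
    rw [hψ0]; simp only [hψ_def]; ring
  have hg_cont : Continuous g := by
    have : Continuous fun y => Real.log (den y) := by
      fun_prop (disch := intro y; exact ne_of_gt (hden_pos y))
    fun_prop
  have hg0 : g 0 = 0 := by simp [hg_def, hden_def]
  have hg_nonpos : ∀ y, g y ≤ 0 := by
    intro y
    rcases le_total 0 y with h | h
    · have hA : AntitoneOn g (Set.Ici 0) := by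
        apply antitoneOn_of_deriv_nonpos (convex_Ici 0) hg_cont.continuousOn
        · intro z _; exact (hgderiv z).differentiableAt.differentiableWithinAt
        · intro z hz
          rw [(hgderiv z).deriv]
          have hz0 : (0:ℝ) ≤ z := Set.mem_Ici.mp (interior_subset hz)
          linarith [hψ_anti hz0]
      calc g y ≤ g 0 := hA Set.self_mem_Ici h h
        _ = 0 := hg0
    · have hM : MonotoneOn g (Set.Iic 0) := by
        apply monotoneOn_of_deriv_nonneg (convex_Iic 0) hg_cont.continuousOn
        · intro z _; exact (hgderiv z).differentiableAt.differentiableWithinAt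
        · intro z hz
          rw [(hgderiv z).deriv]
          have hz0 : z ≤ (0:ℝ) := Set.mem_Iic.mp (interior_subset hz)
          linarith [hψ_anti hz0]
      calc g y ≤ g 0 := hM h Set.self_mem_Iic h
        _ = 0 := hg0
  have key := hg_nonpos x
  have hlhs : (1 - p) * Real.exp (-(p * x)) + p * Real.exp ((1 - p) * x)
      = Real.exp (Real.log (den x) - p * x) := by
    rw [Real.exp_sub, Real.exp_log (hden_pos x)]
    rw [eq_div_iff (ne_of_gt (Real.exp_pos _))]
    simp only [hden_def]
    rw [add_mul, mul_assoc, mul_assoc, ← Real.exp_add, ← Real.exp_add]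
    simp only [neg_add_cancel, Real.exp_zero, mul_one]
    ring_nf
  rw [hlhs]
  apply Real.exp_le_exp.mpr
  simp only [hg_def] at key
  linarith

set_option linter.unusedSectionVars false
section Chernoff
variable {I : Type*} [Fintype I] [DecidableEq I] (r c : I → ℝ)

/-- product Bernoulli weight -/
def bw (ω : I → Bool) : ℝ := ∏ i, (if ω i then r i else 1 - r i)

def bX (ω : I → Bool) : ℝ := ∑ i, c i * (if ω i then 1 else 0)

lemma bw_nonneg (hr0 : ∀ i, 0 ≤ r i) (hr1 : ∀ i, r i ≤ 1) (ω : I → Bool) : 0 ≤ bw r ω :=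
  Finset.prod_nonneg fun i _ => by split <;> [exact hr0 i; linarith [hr1 i]]

lemma bw_mgf_le (hr0 : ∀ i, 0 ≤ r i) (hr1 : ∀ i, r i ≤ 1) (l : ℝ) :
    ∑ ω : I → Bool, bw r ω * Real.exp (l * (bX c ω - ∑ i, c i * r i))
      ≤ Real.exp (l ^ 2 * (∑ i, c i ^ 2) / 8) := by
  have key : ∀ ω : I → Bool, bw r ω * Real.exp (l * (bX c ω - ∑ i, c i * r i))
      = ∏ i, ((if ω i then r i else 1 - r i)
          * Real.exp (l * (c i * (if ω i then 1 else 0) - c i * r i))) := by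
    intro ω
    rw [Finset.prod_mul_distrib]
    congr 1
    rw [← Real.exp_sum]
    congr 1
    rw [bX, ← Finset.sum_sub_distrib, Finset.mul_sum]
  simp only [key]
  have swap : ∑ ω : I → Bool, ∏ i, ((if ω i then r i else 1 - r i)
          * Real.exp (l * (c i * (if ω i then 1 else 0) - c i * r i)))
      = ∏ i, ∑ b : Bool, ((if b then r i else 1 - r i)
          * Real.exp (l * (c i * (if b then 1 else 0) - c i * r i))) := by
    rw [Finset.prod_univ_sum (fun _ => Finset.univ)]
    rw [Fintype.piFinset_univ]
  rw [swap]
  have hfac : ∀ i : I, ∑ b : Bool, ((if b then r i else 1 - r i)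
          * Real.exp (l * (c i * (if b then 1 else 0) - c i * r i)))
      ≤ Real.exp ((l * c i) ^ 2 / 8) := by
    intro i
    have h := hoeffding_two_point (hr0 i) (hr1 i) (l * c i)
    rw [Fintype.sum_bool]
    show r i * Real.exp (l * (c i * 1 - c i * r i))
        + (1 - r i) * Real.exp (l * (c i * 0 - c i * r i)) ≤ _
    have e1 : l * (c i * 1 - c i * r i) = (1 - r i) * (l * c i) := by ring
    have e2 : l * (c i * 0 - c i * r i) = -(r i * (l * c i)) := by ring
    rw [e1, e2]
    linarith
  calc ∏ i, ∑ b : Bool, ((if b then r i else 1 - r i)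
          * Real.exp (l * (c i * (if b then 1 else 0) - c i * r i)))
      ≤ ∏ i, Real.exp ((l * c i) ^ 2 / 8) := by
        apply Finset.prod_le_prod
        · intro i _
          apply Finset.sum_nonneg
          intro b _
          have : (0:ℝ) ≤ (if b then r i else 1 - r i) := by
            split <;> [exact hr0 i; linarith [hr1 i]]
          positivity
        · intro i _; exact hfac i
    _ = Real.exp (l ^ 2 * (∑ i, c i ^ 2) / 8) := by
        rw [← Real.exp_sum]
        congr 1
        rw [Finset.mul_sum, Finset.sum_div]
        exact Finset.sum_congr rfl fun i _ => by ring

lemma chernoff_one_side (hr0 : ∀ i, 0 ≤ r i) (hr1 : ∀ i, r i ≤ 1)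
    {t : ℝ} (ht : 0 < t) (hc : 0 < ∑ i, c i ^ 2) :
    ∑ ω ∈ Finset.univ.filter (fun ω : I → Bool => t ≤ bX c ω - ∑ i, c i * r i), bw r ω
      ≤ Real.exp (-(2 * t ^ 2 / ∑ i, c i ^ 2)) := by
  classical
  set σ2 := ∑ i, c i ^ 2
  set l := 4 * t / σ2 with hl
  have hl0 : 0 < l := by positivity
  set m := ∑ i, c i * r i
  calc ∑ ω ∈ Finset.univ.filter (fun ω : I → Bool => t ≤ bX c ω - m), bw r ω
      ≤ ∑ ω ∈ Finset.univ.filter (fun ω : I → Bool => t ≤ bX c ω - m),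
          bw r ω * Real.exp (l * (bX c ω - m)) * Real.exp (-(l * t)) := by
        apply Finset.sum_le_sum
        intro ω hω
        rw [Finset.mem_filter] at hω
        have h1 : 1 ≤ Real.exp (l * (bX c ω - m)) * Real.exp (-(l * t)) := by
          rw [← Real.exp_add, ← Real.exp_zero]
          apply Real.exp_le_exp.mpr
          nlinarith [hω.2]
        nlinarith [bw_nonneg r hr0 hr1 ω]
    _ ≤ ∑ ω : I → Bool, bw r ω * Real.exp (l * (bX c ω - m)) * Real.exp (-(l * t)) := by
        apply Finset.sum_le_sum_of_subset_of_nonneg (Finset.filter_subset _ _)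
        intro ω _ _
        have := bw_nonneg r hr0 hr1 ω
        positivity
    _ = (∑ ω : I → Bool, bw r ω * Real.exp (l * (bX c ω - m))) * Real.exp (-(l * t)) := by
        rw [← Finset.sum_mul]
    _ ≤ Real.exp (l ^ 2 * σ2 / 8) * Real.exp (-(l * t)) := by
        apply mul_le_mul_of_nonneg_right (bw_mgf_le r c hr0 hr1 l) (Real.exp_nonneg _)
    _ = Real.exp (-(2 * t ^ 2 / σ2)) := by
        rw [← Real.exp_add]
        congr 1
        rw [hl]
        field_simp
        ring
end Chernoff

lemma chernoff_two_sided {I : Type*} [Fintype I] [DecidableEq I] (r c : I → ℝ)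
    (hr0 : ∀ i, 0 ≤ r i) (hr1 : ∀ i, r i ≤ 1)
    {t : ℝ} (ht : 0 < t) (hc : 0 < ∑ i, c i ^ 2) :
    ∑ ω ∈ Finset.univ.filter (fun ω : I → Bool => t < |bX c ω - ∑ i, c i * r i|), bw r ω
      ≤ 2 * Real.exp (-(2 * t ^ 2 / ∑ i, c i ^ 2)) := by
  classical
  set m := ∑ i, c i * r i with hm
  set A := Finset.univ.filter (fun ω : I → Bool => t ≤ bX c ω - m) with hA
  set B := Finset.univ.filter (fun ω : I → Bool => t ≤ -(bX c ω - m)) with hB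
  have hsub : Finset.univ.filter (fun ω : I → Bool => t < |bX c ω - m|) ⊆ A ∪ B := by
    intro ω hω
    rw [Finset.mem_filter] at hω
    rw [Finset.mem_union, hA, hB, Finset.mem_filter, Finset.mem_filter]
    rcases lt_abs.mp hω.2 with h | h
    · exact Or.inl ⟨Finset.mem_univ ω, le_of_lt h⟩
    · exact Or.inr ⟨Finset.mem_univ ω, le_of_lt h⟩
  have hAle : ∑ ω ∈ A, bw r ω ≤ Real.exp (-(2 * t ^ 2 / ∑ i, c i ^ 2)) :=
    chernoff_one_side r c hr0 hr1 ht hc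
  have hBle : ∑ ω ∈ B, bw r ω ≤ Real.exp (-(2 * t ^ 2 / ∑ i, c i ^ 2)) := by
    have hc' : 0 < ∑ i, (-c i) ^ 2 := by simpa using hc
    have := chernoff_one_side r (fun i => -c i) hr0 hr1 ht hc'
    have hfe : Finset.univ.filter
        (fun ω : I → Bool => t ≤ bX (fun i => -c i) ω - ∑ i, (-c i) * r i) = B := by
      rw [hB]
      apply Finset.filter_congr
      intro ω _
      have h1 : bX (fun i => -c i) ω = -(bX c ω) := by
        rw [bX, bX, ← Finset.sum_neg_distrib]
        exact Finset.sum_congr rfl fun i _ => by ring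
      have h2 : ∑ i, (-c i) * r i = -m := by
        rw [hm, ← Finset.sum_neg_distrib]
        exact Finset.sum_congr rfl fun i _ => by ring
      rw [h1, h2]
      constructor <;> intro h <;> linarith
    rw [hfe] at this
    calc ∑ ω ∈ B, bw r ω ≤ Real.exp (-(2 * t ^ 2 / ∑ i, (-c i) ^ 2)) := this
      _ = Real.exp (-(2 * t ^ 2 / ∑ i, c i ^ 2)) := by simp
  calc ∑ ω ∈ Finset.univ.filter (fun ω : I → Bool => t < |bX c ω - m|), bw r ω
      ≤ ∑ ω ∈ A ∪ B, bw r ω := by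
        apply Finset.sum_le_sum_of_subset_of_nonneg hsub
        intro ω _ _; exact bw_nonneg r hr0 hr1 ω
    _ ≤ ∑ ω ∈ A, bw r ω + ∑ ω ∈ B, bw r ω := by
        have := Finset.sum_union_inter (s₁ := A) (s₂ := B) (f := bw r)
        have hint : 0 ≤ ∑ ω ∈ A ∩ B, bw r ω :=
          Finset.sum_nonneg fun ω _ => bw_nonneg r hr0 hr1 ω
        linarith
    _ ≤ 2 * Real.exp (-(2 * t ^ 2 / ∑ i, c i ^ 2)) := by linarith

lemma bw_sum_one {I : Type*} [Fintype I] [DecidableEq I] (r : I → ℝ) :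
    ∑ ω : I → Bool, bw r ω = 1 := by
  have : ∑ ω : I → Bool, bw r ω
      = ∏ i : I, ∑ b : Bool, (if b then r i else 1 - r i) := by
    rw [Finset.prod_univ_sum (fun _ => Finset.univ), Fintype.piFinset_univ]
    rfl
  rw [this]
  rw [Finset.prod_eq_one]
  intro i _
  rw [Fintype.sum_bool]
  show r i + (1 - r i) = 1
  ring

lemma bw_mean {I : Type*} [Fintype I] [DecidableEq I] (r c : I → ℝ) :
    ∑ ω : I → Bool, bw r ω * bX c ω = ∑ i, c i * r i := by
  have step1 : ∑ ω : I → Bool, bw r ω * bX c ω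
      = ∑ i : I, ∑ ω : I → Bool, bw r ω * (c i * (if ω i then 1 else 0)) := by
    rw [Finset.sum_comm]
    exact Finset.sum_congr rfl fun ω _ => by rw [bX, Finset.mul_sum]
  rw [step1]
  apply Finset.sum_congr rfl
  intro i _
  have key : ∀ ω : I → Bool, bw r ω * (c i * (if ω i then 1 else 0))
      = ∏ j : I, ((if ω j then r j else 1 - r j)
          * (if j = i then c i * (if ω j then 1 else 0) else 1)) := by
    intro ω
    rw [Finset.prod_mul_distrib, ← bw]
    congr 1
    rw [Finset.prod_ite_eq' Finset.univ i (fun j => c i * (if ω j then (1:ℝ) else 0))]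
    simp
  simp only [key]
  have swap : (∑ ω : I → Bool, ∏ j : I, ((if ω j then r j else 1 - r j)
          * (if j = i then c i * (if ω j then 1 else 0) else 1)))
      = ∏ j : I, ∑ b : Bool, ((if b then r j else 1 - r j)
          * (if j = i then c i * (if b then 1 else 0) else 1)) := by
    rw [Finset.prod_univ_sum (fun _ => Finset.univ), Fintype.piFinset_univ]
  rw [swap]
  rw [Finset.prod_eq_single i]
  · rw [Fintype.sum_bool]
    show (r i) * (if i = i then c i * 1 else 1) + (1 - r i) * (if i = i then c i * 0 else 1) = _
    simp [mul_comm]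
  · intro j _ hj
    rw [Fintype.sum_bool]
    show (r j) * (if j = i then c i * 1 else 1) + (1 - r j) * (if j = i then c i * 0 else 1) = 1
    rw [if_neg hj, if_neg hj]
    ring
  · intro h
    exact absurd (Finset.mem_univ i) h


lemma card_lt_pairs (n : ℕ) :
    2 * (Finset.univ.filter (fun p : Fin n × Fin n => p.1 < p.2)).card ≤ n ^ 2 := by
  classical
  set A := Finset.univ.filter (fun p : Fin n × Fin n => p.1 < p.2) with hA
  set B := Finset.univ.filter (fun p : Fin n × Fin n => p.2 < p.1) with hB
  have hcard : A.card = B.card := by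
    apply Finset.card_bij (fun p _ => (p.2, p.1))
    · intro p hp
      rw [hA, Finset.mem_filter] at hp
      rw [hB, Finset.mem_filter]
      exact ⟨Finset.mem_univ _, hp.2⟩
    · intro p _ q _ h
      exact Prod.ext (congrArg Prod.snd h) (congrArg Prod.fst h)
    · intro p hp
      rw [hB, Finset.mem_filter] at hp
      exact ⟨(p.2, p.1), by rw [hA, Finset.mem_filter]; exact ⟨Finset.mem_univ _, hp.2⟩, rfl⟩
  have hdisj : Disjoint A B := by
    rw [Finset.disjoint_left]
    intro p hp hq
    rw [hA, Finset.mem_filter] at hp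
    rw [hB, Finset.mem_filter] at hq
    exact absurd hq.2 (not_lt.mpr (le_of_lt hp.2))
  have hun : (A ∪ B).card ≤ (Finset.univ : Finset (Fin n × Fin n)).card :=
    Finset.card_le_card (Finset.subset_univ _)
  rw [Finset.card_union_of_disjoint hdisj] at hun
  simp only [Finset.card_univ, Fintype.card_prod, Fintype.card_fin] at hun
  rw [pow_two]
  omega

lemma tail_le (n : ℕ) (hn2 : 2 ≤ n) (δ : ℝ) (hδ0 : 0 < δ) (hδ1 : δ < 1)
    (σ2 : ℝ) (hσ0 : 0 < σ2) (hσ : σ2 ≤ (n:ℝ)^4/2) :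
    2 * Real.exp (-(2 * (((n:ℝ)^2/2) * Real.sqrt (2*(n:ℝ)*Real.log (2*(n:ℝ)) + Real.log (2/δ)))^2 / σ2))
      ≤ δ * ((2*(n:ℝ))^(2*n))⁻¹ := by
  have hn1 : (1:ℝ) ≤ (n:ℝ) := by exact_mod_cast le_trans (by norm_num) hn2
  set L := 2*(n:ℝ)*Real.log (2*(n:ℝ)) + Real.log (2/δ) with hL
  have hlog1 : 0 ≤ Real.log (2*(n:ℝ)) := Real.log_nonneg (by linarith)
  have hlog2 : 0 < Real.log (2/δ) := Real.log_pos (by rw [lt_div_iff₀ hδ0]; linarith)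
  have hL0 : 0 < L := by rw [hL]; nlinarith
  have ht2 : (((n:ℝ)^2/2) * Real.sqrt L)^2 = (n:ℝ)^4/4 * L := by
    rw [mul_pow, Real.sq_sqrt hL0.le]; ring
  have hexp : L ≤ 2 * (((n:ℝ)^2/2) * Real.sqrt L)^2 / σ2 := by
    rw [ht2]
    rw [le_div_iff₀ hσ0]
    nlinarith
  have step1 : 2 * Real.exp (-(2 * (((n:ℝ)^2/2) * Real.sqrt L)^2 / σ2)) ≤ 2 * Real.exp (-L) := by
    have := Real.exp_le_exp.mpr (neg_le_neg hexp)
    linarith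
  refine le_trans step1 (le_of_eq ?_)
  have e1 : Real.exp (-L) = Real.exp (-(2*(n:ℝ)*Real.log (2*(n:ℝ)))) * Real.exp (-(Real.log (2/δ))) := by
    rw [← Real.exp_add, hL]; ring_nf
  have e2 : Real.exp (-(2*(n:ℝ)*Real.log (2*(n:ℝ)))) = ((2*(n:ℝ))^(2*n))⁻¹ := by
    rw [Real.exp_neg]
    congr 1
    rw [show (2:ℝ) * (n:ℝ) * Real.log (2*(n:ℝ)) = ((2*n : ℕ):ℝ) * Real.log (2*(n:ℝ)) by
      push_cast; ring]
    rw [← Real.log_pow, Real.exp_log (by positivity)]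
  have e3 : Real.exp (-(Real.log (2/δ))) = δ / 2 := by
    rw [Real.exp_neg, Real.exp_log (by positivity), inv_div]
  rw [e1, e2, e3]
  ring

namespace HTree
variable {n : ℕ}

lemma leaves_node (l r : HTree n) : (node l r).leaves = l.leaves ∪ r.leaves := by
  simp [leaves, leafList]

lemma lcaSize_le_card (T : HTree n) (i j : Fin n) : T.lcaSize i j ≤ T.leaves.card := by
  induction T with
  | leaf v => simp [lcaSize, leaves, leafList]
  | node l r ihl ihr =>
    rw [lcaSize, leaves_node]
    split_ifs with h1 h2
    · exact le_trans (ihl) (Finset.card_le_card Finset.subset_union_left)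
    · exact le_trans (ihr) (Finset.card_le_card Finset.subset_union_right)
    · exact le_refl _

lemma lcaSize_le (T : HTree n) (i j : Fin n) : T.lcaSize i j ≤ n := by
  refine le_trans (lcaSize_le_card T i j) ?_
  simpa using Finset.card_le_univ T.leaves

/-- Preorder encoding of a tree. -/
def enc : HTree n → List (Fin n ⊕ Unit)
  | .leaf v => [Sum.inl v]
  | .node l r => Sum.inr () :: (l.enc ++ r.enc)

lemma enc_prefix : ∀ (t₁ t₂ : HTree n) (s₁ s₂ : List (Fin n ⊕ Unit)),
    t₁.enc ++ s₁ = t₂.enc ++ s₂ → t₁ = t₂ ∧ s₁ = s₂ := by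
  intro t₁
  induction t₁ with
  | leaf v =>
    intro t₂ s₁ s₂ h
    cases t₂ with
    | leaf w =>
      simp only [enc, List.cons_append, List.nil_append, List.cons.injEq] at h
      obtain ⟨h1, h2⟩ := h
      exact ⟨by rw [Sum.inl.injEq] at h1; rw [h1], h2⟩
    | node l r =>
      simp only [enc, List.cons_append, List.cons.injEq] at h
      exact absurd h.1 (by simp)
  | node l r ihl ihr =>
    intro t₂ s₁ s₂ h
    cases t₂ with
    | leaf w =>
      simp only [enc, List.cons_append, List.cons.injEq] at h
      exact absurd h.1 (by simp)
    | node l₂ r₂ =>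
      simp only [enc, List.cons_append, List.cons.injEq, List.append_assoc] at h
      obtain ⟨l_eq, s_eq⟩ := ihl l₂ (r.enc ++ s₁) (r₂.enc ++ s₂) h.2
      obtain ⟨r_eq, s_eq'⟩ := ihr r₂ s₁ s₂ s_eq
      exact ⟨by rw [l_eq, r_eq], s_eq'⟩

lemma enc_injective : Function.Injective (enc : HTree n → List (Fin n ⊕ Unit)) := by
  intro t₁ t₂ h
  have := enc_prefix t₁ t₂ [] [] (by simpa using h)
  exact this.1

lemma enc_length (T : HTree n) : T.enc.length + 1 = 2 * T.leafList.length := by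
  induction T with
  | leaf v => simp [enc, leafList]
  | node l r ihl ihr =>
    simp only [enc, leafList, List.length_cons, List.length_append]
    omega

lemma full_leafList_length (T : HTree n) (h : T.IsFullTree) : T.leafList.length = n := by
  have := List.toFinset_card_of_nodup h.1
  rw [show T.leafList.toFinset = T.leaves from rfl, h.2] at this
  simp at this
  omega

instance : DecidableEq (HTree n) := fun a b =>
  decidable_of_iff _ (enc_injective.eq_iff (a := a) (b := b))

noncomputable instance fullFintype : Fintype {T : HTree n // T.IsFullTree} := by
  classical
  have hinj : Function.Injective
      (fun T : {T : HTree n // T.IsFullTree} =>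
        (fun k : Fin (2 * n) => T.1.enc.getD k (Sum.inr ()))) := by
    intro T₁ T₂ h
    have hlen1 : T₁.1.enc.length = 2 * n - 1 := by
      have := enc_length T₁.1; rw [full_leafList_length T₁.1 T₁.2] at this; omega
    have hlen2 : T₂.1.enc.length = 2 * n - 1 := by
      have := enc_length T₂.1; rw [full_leafList_length T₂.1 T₂.2] at this; omega
    apply Subtype.ext
    apply enc_injective
    apply List.ext_getElem (by rw [hlen1, hlen2])
    intro k hk1 hk2
    have hk : k < 2 * n := by omega
    have := congrFun h ⟨k, hk⟩
    simp only at this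
    rwa [List.getD_eq_getElem _ _ (by omega), List.getD_eq_getElem _ _ (by omega)] at this
  exact Fintype.ofInjective _ hinj

lemma full_card_le (hn : 1 ≤ n) :
    (Fintype.card {T : HTree n // T.IsFullTree} : ℝ) ≤ (2 * n : ℝ) ^ (2 * n) := by
  classical
  have hinj : Function.Injective
      (fun T : {T : HTree n // T.IsFullTree} =>
        (fun k : Fin (2 * n) => T.1.enc.getD k (Sum.inr ()))) := by
    intro T₁ T₂ h
    have hlen1 : T₁.1.enc.length = 2 * n - 1 := by
      have := enc_length T₁.1; rw [full_leafList_length T₁.1 T₁.2] at this; omega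
    have hlen2 : T₂.1.enc.length = 2 * n - 1 := by
      have := enc_length T₂.1; rw [full_leafList_length T₂.1 T₂.2] at this; omega
    apply Subtype.ext
    apply enc_injective
    apply List.ext_getElem (by rw [hlen1, hlen2])
    intro k hk1 hk2
    have hk : k < 2 * n := by omega
    have := congrFun h ⟨k, hk⟩
    simp only at this
    rwa [List.getD_eq_getElem _ _ (by omega), List.getD_eq_getElem _ _ (by omega)] at this
  have hcard := Fintype.card_le_of_injective _ hinj
  have h2 : Fintype.card (Fin (2 * n) → (Fin n ⊕ Unit)) = (n + 1) ^ (2 * n) := by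
    simp [Fintype.card_fun]
  rw [h2] at hcard
  calc (Fintype.card {T : HTree n // T.IsFullTree} : ℝ) ≤ ((n + 1) ^ (2 * n) : ℕ) := by
        exact_mod_cast hcard
    _ ≤ (2 * n : ℝ) ^ (2 * n) := by
        push_cast
        apply pow_le_pow_left₀ (by positivity)
        push_cast
        have : (1:ℝ) ≤ (n:ℝ) := by exact_mod_cast hn
        linarith

lemma leaves_nonempty (T : HTree n) : T.leaves.Nonempty := by
  induction T with
  | leaf v => exact ⟨v, by simp [leaves, leafList]⟩
  | node l r ihl ihr =>
    rw [leaves_node]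
    exact ihl.mono Finset.subset_union_left

lemma lcaSize_pos (T : HTree n) (i j : Fin n) : 0 < T.lcaSize i j := by
  induction T with
  | leaf v => simp [lcaSize]
  | node l r ihl ihr =>
    rw [lcaSize]
    split_ifs with h1 h2
    · exact ihl
    · exact ihr
    · exact Finset.card_pos.mpr ((l.leaves_nonempty).mono Finset.subset_union_left)

end HTree

end Aux


open MeasureTheory in
/-- Concentration for the `(n,p,q)`-planted partition model: the random graph is a
product of independent Bernoulli edge indicators (probability `p` inside the two
clusters `{i < n/2}`, `{i ≥ n/2}`, and `q` across).  With probability at least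
`1 - δ`, simultaneously for all full trees `T`,
`|cost_G(T) - E[cost_G(T)]| ≤ (n²/2)√(2n ln(2n) + ln(2/δ))`. -/
theorem planted_partition_concentration (n : ℕ) (hn : Even n) (hn2 : 2 ≤ n)
    (p q : ℝ) (hq0 : 0 ≤ q) (hqp : q ≤ p) (hp1 : p ≤ 1)
    (δ : ℝ) (hδ0 : 0 < δ) (hδ1 : δ < 1)
    (μ : Measure ((Fin n × Fin n) → Bool))
    (hμ : μ = Measure.pi (fun e =>
      (PMF.bernoulli
        (Real.toNNReal (if (e.1.val < n / 2 ↔ e.2.val < n / 2) then p else q))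
        (by split_ifs <;> exact Real.toNNReal_le_one.mpr (by linarith))).toMeasure)) :
    ENNReal.ofReal (1 - δ) ≤
      μ {ω | ∀ T : HTree n, T.IsFullTree →
        |(∑ e ∈ Finset.univ.filter (fun e : Fin n × Fin n => e.1 < e.2),
            if ω e then (T.lcaSize e.1 e.2 : ℝ) else 0)
          - ∫ ω', (∑ e ∈ Finset.univ.filter (fun e : Fin n × Fin n => e.1 < e.2),
              if ω' e then (T.lcaSize e.1 e.2 : ℝ) else 0) ∂μ|
          ≤ ((n : ℝ) ^ 2 / 2) *
              Real.sqrt (2 * n * Real.log (2 * n) + Real.log (2 / δ))} := by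
  classical
  have hn1 : 1 ≤ n := le_trans (by norm_num) hn2
  haveI : IsProbabilityMeasure μ := by rw [hμ]; infer_instance
  set r : Fin n × Fin n → ℝ :=
    fun e => if (e.1.val < n / 2 ↔ e.2.val < n / 2) then p else q with hr_def
  have hr0 : ∀ e, 0 ≤ r e := by
    intro e; rw [hr_def]; dsimp only; split <;> linarith
  have hr1 : ∀ e, r e ≤ 1 := by
    intro e; rw [hr_def]; dsimp only; split <;> linarith
  have hsingle : ∀ ω : (Fin n × Fin n) → Bool, μ {ω} = ENNReal.ofReal (bw r ω) := by
    intro ω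
    rw [hμ, ← Set.univ_pi_singleton ω, MeasureTheory.Measure.pi_pi]
    simp only [bw]
    rw [ENNReal.ofReal_prod_of_nonneg (fun e _ => by
      split <;> [exact hr0 e; linarith [hr1 e]])]
    apply Finset.prod_congr rfl
    intro e _
    rw [PMF.toMeasure_apply_singleton _ _ (measurableSet_singleton _), PMF.bernoulli_apply]
    cases hb : ω e
    · show 1 - ENNReal.ofReal (r e) = ENNReal.ofReal (if false = true then r e else 1 - r e)
      rw [if_neg (by simp)]
      rw [ENNReal.ofReal_sub 1 (hr0 e), ENNReal.ofReal_one]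
    · show ENNReal.ofReal (r e) = ENNReal.ofReal (if true = true then r e else 1 - r e)
      rw [if_pos rfl]
  have hset : ∀ s : Set ((Fin n × Fin n) → Bool),
      μ s = ∑ ω ∈ Finset.univ.filter (fun ω => ω ∈ s), ENNReal.ofReal (bw r ω) := by
    intro s
    have hrw : s = ⋃ ω ∈ Finset.univ.filter (fun ω => ω ∈ s), ({ω} : Set _) := by
      ext x; simp
    conv_lhs => rw [hrw]
    rw [measure_biUnion_finset]
    · exact Finset.sum_congr rfl fun ω _ => hsingle ω
    · intro a _ b _ hab
      simp only [Set.disjoint_singleton]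
      exact hab
    · intro ω _; exact measurableSet_singleton ω
  set c : HTree n → (Fin n × Fin n) → ℝ :=
    fun T e => if e.1 < e.2 then (T.lcaSize e.1 e.2 : ℝ) else 0 with hc_def
  have hX : ∀ (T : HTree n) (ω : (Fin n × Fin n) → Bool),
      (∑ e ∈ Finset.univ.filter (fun e : Fin n × Fin n => e.1 < e.2),
        if ω e then (T.lcaSize e.1 e.2 : ℝ) else 0) = bX (c T) ω := by
    intro T ω
    simp only [bX, hc_def]
    rw [Finset.sum_filter]
    apply Finset.sum_congr rfl
    intro e _
    split_ifs <;> ring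
  have hmean : ∀ T : HTree n,
      (∫ ω', (∑ e ∈ Finset.univ.filter (fun e : Fin n × Fin n => e.1 < e.2),
        if ω' e then (T.lcaSize e.1 e.2 : ℝ) else 0) ∂μ) = ∑ e, c T e * r e := by
    intro T
    rw [MeasureTheory.integral_fintype (MeasureTheory.Integrable.of_finite)]
    rw [← bw_mean r (c T)]
    apply Finset.sum_congr rfl
    intro ω _
    rw [measureReal_def, hsingle ω, ENNReal.toReal_ofReal (bw_nonneg r hr0 hr1 ω), smul_eq_mul, hX]
  set t : ℝ := ((n:ℝ)^2/2) * Real.sqrt (2*(n:ℝ)*Real.log (2*(n:ℝ)) + Real.log (2/δ))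
    with ht_def
  have hlog2 : 0 < Real.log (2/δ) := Real.log_pos (by rw [lt_div_iff₀ hδ0]; linarith)
  have hlog1 : 0 ≤ Real.log (2*(n:ℝ)) := Real.log_nonneg (by
    have : (1:ℝ) ≤ (n:ℝ) := by exact_mod_cast hn1
    linarith)
  have hL0 : 0 < 2*(n:ℝ)*Real.log (2*(n:ℝ)) + Real.log (2/δ) := by
    have : (0:ℝ) ≤ (n:ℝ) := Nat.cast_nonneg n
    nlinarith
  have ht0 : 0 < t := by
    rw [ht_def]
    have hnn : (0:ℝ) < (n:ℝ) := by exact_mod_cast lt_of_lt_of_le (by norm_num) hn2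
    positivity
  have hσle : ∀ T : HTree n, ∑ e, (c T e)^2 ≤ (n:ℝ)^4/2 := by
    intro T
    have h1 : ∑ e, (c T e)^2
        = ∑ e ∈ Finset.univ.filter (fun e : Fin n × Fin n => e.1 < e.2),
            ((T.lcaSize e.1 e.2 : ℝ))^2 := by
      simp only [hc_def]
      rw [Finset.sum_filter]
      apply Finset.sum_congr rfl
      intro e _
      split_ifs <;> ring
    rw [h1]
    have h2 : ∑ e ∈ Finset.univ.filter (fun e : Fin n × Fin n => e.1 < e.2),
            ((T.lcaSize e.1 e.2 : ℝ))^2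
        ≤ ∑ _e ∈ Finset.univ.filter (fun e : Fin n × Fin n => e.1 < e.2), (n:ℝ)^2 := by
      apply Finset.sum_le_sum
      intro e _
      have hle : ((T.lcaSize e.1 e.2 : ℝ)) ≤ (n:ℝ) := by
        exact_mod_cast T.lcaSize_le e.1 e.2
      exact pow_le_pow_left₀ (by positivity) hle 2
    refine le_trans h2 ?_
    rw [Finset.sum_const, nsmul_eq_mul]
    have hcards := card_lt_pairs n
    have hcast : ((Finset.univ.filter (fun p : Fin n × Fin n => p.1 < p.2)).card : ℝ)
        ≤ (n:ℝ)^2/2 := by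
      rw [le_div_iff₀ (by norm_num)]
      have : ((Finset.univ.filter (fun p : Fin n × Fin n => p.1 < p.2)).card : ℝ) * 2
          = ((2 * (Finset.univ.filter (fun p : Fin n × Fin n => p.1 < p.2)).card : ℕ) : ℝ) := by
        push_cast; ring
      rw [this]
      exact_mod_cast hcards
    have hn2r : (0:ℝ) ≤ (n:ℝ)^2 := by positivity
    nlinarith
  have hσpos : ∀ T : HTree n, 0 < ∑ e, (c T e)^2 := by
    intro T
    apply Finset.sum_pos'
    · intro e _; positivity
    · refine ⟨(⟨0, by omega⟩, ⟨1, by omega⟩), Finset.mem_univ _, ?_⟩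
      simp only [hc_def]
      rw [if_pos (by simp [Prod.lt_iff, Fin.lt_def])]
      have := T.lcaSize_pos ⟨0, by omega⟩ ⟨1, by omega⟩
      have h1 : (1:ℝ) ≤ (T.lcaSize ⟨0, by omega⟩ ⟨1, by omega⟩ : ℝ) := by exact_mod_cast this
      nlinarith
  set Bad : {T : HTree n // T.IsFullTree} → Set ((Fin n × Fin n) → Bool) :=
    fun T => {ω | t < |bX (c T.1) ω - ∑ e, c T.1 e * r e|} with hBad_def
  set G : Set ((Fin n × Fin n) → Bool) :=
    {ω | ∀ T : HTree n, T.IsFullTree →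
        |(∑ e ∈ Finset.univ.filter (fun e : Fin n × Fin n => e.1 < e.2),
            if ω e then (T.lcaSize e.1 e.2 : ℝ) else 0)
          - ∫ ω', (∑ e ∈ Finset.univ.filter (fun e : Fin n × Fin n => e.1 < e.2),
              if ω' e then (T.lcaSize e.1 e.2 : ℝ) else 0) ∂μ| ≤ t} with hG_def
  have hGoodc : Gᶜ ⊆ ⋃ T : {T : HTree n // T.IsFullTree}, Bad T := by
    intro ω hω
    rw [Set.mem_compl_iff, hG_def, Set.mem_setOf_eq] at hω
    push_neg at hω
    obtain ⟨T, hT, hlt⟩ := hω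
    rw [hX T ω, hmean T] at hlt
    exact Set.mem_iUnion.mpr ⟨⟨T, hT⟩, hlt⟩
  have hmain : μ Gᶜ ≤ ENNReal.ofReal δ := by
    refine le_trans (measure_mono hGoodc) ?_
    refine le_trans (measure_iUnion_le _) ?_
    rw [tsum_fintype]
    have hper : ∀ T : {T : HTree n // T.IsFullTree},
        μ (Bad T) ≤ ENNReal.ofReal (δ * ((2*(n:ℝ))^(2*n))⁻¹) := by
      intro T
      rw [hset (Bad T)]
      rw [← ENNReal.ofReal_sum_of_nonneg (fun ω _ => bw_nonneg r hr0 hr1 ω)]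
      apply ENNReal.ofReal_le_ofReal
      have happ := chernoff_two_sided r (c T.1) hr0 hr1 ht0 (hσpos T.1)
      have hfe : (Finset.univ.filter (fun ω : (Fin n × Fin n) → Bool => ω ∈ Bad T))
          = Finset.univ.filter
              (fun ω : (Fin n × Fin n) → Bool => t < |bX (c T.1) ω - ∑ e, c T.1 e * r e|) := by
        apply Finset.filter_congr
        intro ω _
        rw [hBad_def]
        rfl
      rw [hfe]
      exact le_trans happ (tail_le n hn2 δ hδ0 hδ1 _ (hσpos T.1) (hσle T.1))
    refine le_trans (Finset.sum_le_sum fun T _ => hper T) ?_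
    rw [Finset.sum_const, Finset.card_univ, nsmul_eq_mul]
    rw [← ENNReal.ofReal_natCast, ← ENNReal.ofReal_mul (by positivity)]
    apply ENNReal.ofReal_le_ofReal
    have hcard := HTree.full_card_le (n := n) hn1
    have hNpos : (0:ℝ) < (2*(n:ℝ))^(2*n) := by
      have hnn : (0:ℝ) < (n:ℝ) := by exact_mod_cast lt_of_lt_of_le (by norm_num) hn2
      positivity
    calc (Fintype.card {T : HTree n // T.IsFullTree} : ℝ) * (δ * ((2*(n:ℝ))^(2*n))⁻¹)
        ≤ (2*(n:ℝ))^(2*n) * (δ * ((2*(n:ℝ))^(2*n))⁻¹) := by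
          apply mul_le_mul_of_nonneg_right hcard
          positivity
      _ = δ := by field_simp
  have hGm : MeasurableSet G := (Set.toFinite G).measurableSet
  have h1 : μ G = 1 - μ Gᶜ := by
    rw [← prob_compl_eq_one_sub hGm.compl, compl_compl]
  calc ENNReal.ofReal (1-δ) = 1 - ENNReal.ofReal δ := by
        rw [ENNReal.ofReal_sub 1 hδ0.le, ENNReal.ofReal_one]
    _ ≤ 1 - μ Gᶜ := tsub_le_tsub_left hmain 1
    _ = μ G := h1.symm
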